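/- Online determinability implies pointwise distinguishability: if a nonempty finite set of states T is online determinable, then for every state s ∈ T there exists an input word w such that for all s' ∈ T with s' ≠ s, H(s', w) ≠ H(s, w). -/

import Mathlib

variable {I S O : Type} [Fintype I] [Fintype S] [Fintype O]
  [DecidableEq I] [DecidableEq S] [DecidableEq O]

/-- Output sequence generated from state `s` by input word `w`. -/
def Hout (sig : I → S → S) (rho : S → O) : S → List I → List O
  | s, [] => [rho s]
  | s, i :: w => rho s :: Hout sig rho (sig i s) w

/-- Derivation function: successors of `T` under input `i` producing output `o`. -/
def zeta (sig : I → S → S) (rho : S → O) (T : Finset S) (i : I) (o : O) : Finset S :=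
  (T.image (sig i)).filter (fun s' => rho s' = o)

/-- Online determinability of a finite set of states. -/
inductive Det (sig : I → S → S) (rho : S → O) : Finset S → Prop
  | single (T : Finset S) (h : T.card = 1) : Det sig rho T
  | step (T : Finset S) (i : I) (hinj : (T.image (sig i)).card = T.card)
      (h : ∀ o : O, (zeta sig rho T i o).Nonempty → Det sig rho (zeta sig rho T i o)) :
      Det sig rho T

/-- Safe inputs for a set of states. -/
def psi (sig : I → S → S) (rho : S → O) (T : Finset S) : Set I :=
  {i | (T.image (sig i)).card = T.card ∧
    ∀ o : O, (zeta sig rho T i o).Nonempty → Det sig rho (zeta sig rho T i o)}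

theorem det_implies_pointwise_disting (sig : I → S → S) (rho : S → O)
    (T : Finset S) (hne : T.Nonempty) (hdet : Det sig rho T) :
    ∀ s ∈ T, ∃ w : List I, ∀ s' ∈ T, s' ≠ s →
      Hout sig rho s' w ≠ Hout sig rho s w := by
  clear hne
  induction hdet with
  | single T h =>
    intro s hs
    exact ⟨[], fun s' hs' hne => absurd (Finset.card_le_one.mp h.le s' hs' s hs) hne⟩
  | step T i hinj h ih =>
    intro s hs
    have hIon : Set.InjOn (sig i) T := Finset.card_image_iff.mp hinj
    set o := rho (sig i s) with ho
    have hmem : sig i s ∈ zeta sig rho T i o := by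
      simp [zeta, Finset.mem_filter]
      exact ⟨⟨s, hs, rfl⟩, by rw [ho]⟩
    obtain ⟨w, hw⟩ := ih o ⟨_, hmem⟩ _ hmem
    refine ⟨i :: w, fun s' hs' hne => ?_⟩
    simp only [Hout, ne_eq, List.cons.injEq, not_and]
    intro _
    by_cases hro : rho (sig i s') = o
    · have hmem' : sig i s' ∈ zeta sig rho T i o := by
        simp [zeta, Finset.mem_filter, hro]
        exact ⟨s', hs', rfl⟩
      exact hw _ hmem' (fun e => hne (hIon hs' hs e))
    · have : (Hout sig rho (sig i s') w).head? ≠ (Hout sig rho (sig i s) w).head? := by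
        cases w <;> simp [Hout] <;> exact hro
      exact fun e => this (by rw [e])
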